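/- Let f : K → L be a full monotone map of finite posets such that the dual map f^op : K^op → L^op (the same function between the order duals) is a filtration map. Then f^op is a constructible map if and only if, for every σ ∈ L, the order dual (f⁻¹(σ))^op of the fiber f⁻¹(σ) is a constructible poset. -/

import Mathlib

/-- `a` is a maximal element of the subposet `A`. -/
def IsMaxIn {P : Type*} [PartialOrder P] (A : Set P) (a : P) : Prop :=
  a ∈ A ∧ ∀ x ∈ A, a ≤ x → x = a

/-- `b` covers `a` within the subposet `A`: `a < b` and no element of `A` lies
strictly between them. -/
def CoversIn {P : Type*} [PartialOrder P] (A : Set P) (a b : P) : Prop :=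
  a ∈ A ∧ b ∈ A ∧ a < b ∧ ∀ x ∈ A, a < x → ¬x < b

/-- The subposet `A` is of codimension one in the subposet `B`: every maximal element
of `A` is covered (within `B`) by a maximal element of `B`. -/
def CodimOneIn {P : Type*} [PartialOrder P] (A B : Set P) : Prop :=
  ∀ a : P, IsMaxIn A a → ∃ b : P, IsMaxIn B b ∧ CoversIn B a b

/-- The subposet `A` is of pure codimension one in the subposet `B`: it is of
codimension one, and no maximal element of `A` is covered by a non-maximal element
of `B`. -/
def PureCodimOneIn {P : Type*} [PartialOrder P] (A B : Set P) : Prop :=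
  CodimOneIn A B ∧ ∀ a : P, IsMaxIn A a → ∀ b : P, CoversIn B a b → IsMaxIn B b

/-- `A` is a closed subposet of the subposet `B`. -/
def IsClosedSubposet {P : Type*} [PartialOrder P] (B A : Set P) : Prop :=
  A ⊆ B ∧ ∀ a ∈ A, ∀ x ∈ B, x ≤ a → x ∈ A

/-- A (sub)poset is constructible if either it has a greatest element, or it is a union
`Q ∪ R` of closed subposets such that `Q ∩ R` is of codimension one both in `Q` and in
`R`, and each of `Q`, `R` and `Q ∩ R` is constructible. -/
inductive PosetConstructible {P : Type*} [PartialOrder P] : Set P → Prop where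
  | cone {A : Set P} {g : P} (hg : g ∈ A) (hgreatest : ∀ x ∈ A, x ≤ g) :
      PosetConstructible A
  | step {Q R : Set P} (hQ : IsClosedSubposet (Q ∪ R) Q) (hR : IsClosedSubposet (Q ∪ R) R)
      (hcQ : CodimOneIn (Q ∩ R) Q) (hcR : CodimOneIn (Q ∩ R) R)
      (cQ : PosetConstructible Q) (cR : PosetConstructible R)
      (cQR : PosetConstructible (Q ∩ R)) : PosetConstructible (Q ∪ R)

/-- A monotone map `f : P → Q` is a filtration map if `f⁻¹(⌊q⌋ \ {q})` is of
codimension one in `f⁻¹(⌊q⌋)` for every `q`. -/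
def IsFiltrationMap {P Q : Type*} [PartialOrder P] [PartialOrder Q] (f : P → Q) : Prop :=
  ∀ q : Q, CodimOneIn (f ⁻¹' {y | y < q}) (f ⁻¹' {y | y ≤ q})

/-- A monotone map `f : P → Q` is a pure filtration map if `f⁻¹(⌊q⌋ \ {q})` is of
pure codimension one in `f⁻¹(⌊q⌋)` for every `q`. -/
def IsPureFiltrationMap {P Q : Type*} [PartialOrder P] [PartialOrder Q] (f : P → Q) :
    Prop :=
  ∀ q : Q, PureCodimOneIn (f ⁻¹' {y | y < q}) (f ⁻¹' {y | y ≤ q})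

/-- A monotone map is constructible if it is a filtration map and every `f⁻¹(⌊q⌋)` is
constructible. -/
def IsConstructibleMap {P Q : Type*} [PartialOrder P] [PartialOrder Q] (f : P → Q) :
    Prop :=
  IsFiltrationMap f ∧ ∀ q : Q, PosetConstructible (f ⁻¹' {y | y ≤ q})

/-- A subposet `Q` of `P` is full if for every `p ∈ P` the set `⌊p⌋ ∩ Q` is
empty or has a greatest element. -/
def IsFullSub {P : Type*} [PartialOrder P] (Q : Set P) : Prop :=
  ∀ p : P, {x | x ∈ Q ∧ x ≤ p} = ∅ ∨
    ∃ g ∈ Q, g ≤ p ∧ ∀ x ∈ Q, x ≤ p → x ≤ g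

/-- The dual of a monotone map: the same function between the order duals. -/
def dualMap {P Q : Type*} [PartialOrder P] [PartialOrder Q] (f : P → Q) :
    Pᵒᵈ → Qᵒᵈ :=
  fun x => OrderDual.toDual (f (OrderDual.ofDual x))

section Aux
variable {P : Type*} [PartialOrder P]

lemma existsMaxAbove [Finite P] {A : Set P} {p : P} (hp : p ∈ A) :
    ∃ m, p ≤ m ∧ IsMaxIn A m := by
  obtain ⟨m, hm, hmax⟩ := Set.Finite.exists_maximalFor id {x ∈ A | p ≤ x}
    (Set.toFinite _) ⟨p, hp, le_refl p⟩
  exact ⟨m, hm.2, hm.1, fun x hx hmx => le_antisymm (hmax ⟨hx, hm.2.trans hmx⟩ hmx) hmx⟩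

/-- If the "fiber" `F` is constructible and `S` retracts onto `F` (with `F` up-closed
in `S` and every point of `S` having a least element of `F` above it), then `S` is
constructible. -/
lemma constructible_of_retract {F : Set P} (hF : PosetConstructible F) :
    ∀ S : Set P, F ⊆ S → (∀ a ∈ F, ∀ x ∈ S, a ≤ x → x ∈ F) →
      (∀ p ∈ S, ∃ g ∈ F, p ≤ g ∧ ∀ x ∈ F, p ≤ x → g ≤ x) →
      PosetConstructible S := by
  induction hF with
  | @cone A g hg hgr =>
      intro S hFS hup hret
      refine .cone (hFS hg) (fun x hx => ?_)
      obtain ⟨g', hg', hle, -⟩ := hret x hx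
      exact hle.trans (hgr g' hg')
  | @step Q R hQ hR hcQ hcR cQ cR cQR ihQ ihR ihQR =>
      intro S hFS hup hret
      choose! r hrF hrle hrleast using hret
      have hfix : ∀ q ∈ Q ∪ R, r q = q := fun q hq =>
        le_antisymm (hrleast q (hFS hq) q hq le_rfl) (hrle q (hFS hq))
      have hmono : ∀ p ∈ S, ∀ p' ∈ S, p ≤ p' → r p ≤ r p' := fun p hp p' hp' h =>
        hrleast p hp (r p') (hrF p' hp') (h.trans (hrle p' hp'))
      set Q' : Set P := {p | p ∈ S ∧ r p ∈ Q} with hQ'def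
      set R' : Set P := {p | p ∈ S ∧ r p ∈ R} with hR'def
      have hsubQ : Q ⊆ Q' := fun q hq => ⟨hFS (Or.inl hq), by rw [hfix q (Or.inl hq)]; exact hq⟩
      have hsubR : R ⊆ R' := fun q hq => ⟨hFS (Or.inr hq), by rw [hfix q (Or.inr hq)]; exact hq⟩
      have hSQR : S = Q' ∪ R' := by
        ext p
        constructor
        · intro hp
          rcases hrF p hp with h | h
          · exact Or.inl ⟨hp, h⟩
          · exact Or.inr ⟨hp, h⟩
        · rintro (⟨hp, -⟩ | ⟨hp, -⟩) <;> exact hp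
      have hUS : Q' ∪ R' ⊆ S := hSQR ▸ le_refl _
      have hclQ : IsClosedSubposet (Q' ∪ R') Q' := by
        refine ⟨Set.subset_union_left, fun a ha x hx hxa => ?_⟩
        have hxS : x ∈ S := hUS hx
        exact ⟨hxS, hQ.2 (r a) ha.2 (r x) (hrF x hxS) (hmono x hxS a ha.1 hxa)⟩
      have hclR : IsClosedSubposet (Q' ∪ R') R' := by
        refine ⟨Set.subset_union_right, fun a ha x hx hxa => ?_⟩
        have hxS : x ∈ S := hUS hx
        exact ⟨hxS, hR.2 (r a) ha.2 (r x) (hrF x hxS) (hmono x hxS a ha.1 hxa)⟩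
      have hcodim : ∀ T T' : Set P, T' = {p | p ∈ S ∧ r p ∈ T} → T ⊆ Q ∪ R →
          Q' ∩ R' ⊆ T' → CodimOneIn (Q ∩ R) T → CodimOneIn (Q' ∩ R') T' := by
        rintro T T' rfl hTF hIT hcT a hamax
        obtain ⟨⟨haS, harQ⟩, ⟨-, harR⟩⟩ := hamax.1
        have hraF : r a ∈ Q ∪ R := hrF a haS
        have hfixra : r (r a) = r a := hfix (r a) hraF
        have hraI : r a ∈ Q' ∩ R' :=
          ⟨⟨hFS hraF, by rw [hfixra]; exact harQ⟩, ⟨hFS hraF, by rw [hfixra]; exact harR⟩⟩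
        have heq : r a = a := hamax.2 (r a) hraI (hrle a haS)
        have haQR : a ∈ Q ∩ R := ⟨heq ▸ harQ, heq ▸ harR⟩
        have hamax' : IsMaxIn (Q ∩ R) a := by
          refine ⟨haQR, fun x hx hax => ?_⟩
          have hxF : x ∈ Q ∪ R := Or.inl hx.1
          exact hamax.2 x ⟨⟨hFS hxF, by rw [hfix x hxF]; exact hx.1⟩,
            ⟨hFS hxF, by rw [hfix x hxF]; exact hx.2⟩⟩ hax
        obtain ⟨b, hbmax, hbcov⟩ := hcT a hamax'
        have hbF : b ∈ Q ∪ R := hTF hbmax.1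
        have hbT' : b ∈ {p | p ∈ S ∧ r p ∈ T} := ⟨hFS hbF, by rw [hfix b hbF]; exact hbmax.1⟩
        have haF : a ∈ Q ∪ R := Or.inl haQR.1
        have hmemT : ∀ x ∈ {p | p ∈ S ∧ r p ∈ T}, a < x → x ∈ T := by
          intro x hx hax
          have hxF : x ∈ Q ∪ R := hup a haF x hx.1 hax.le
          rw [← hfix x hxF]; exact hx.2
        refine ⟨b, ⟨hbT', fun x hx hbx =>
            hbmax.2 x (hmemT x hx (hbcov.2.2.1.trans_le hbx)) hbx⟩,
          hIT hamax.1, hbT', hbcov.2.2.1,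
          fun x hx hax hxb => hbcov.2.2.2 x (hmemT x hx hax) hax hxb⟩
      have cQ' : PosetConstructible Q' := by
        refine ihQ Q' hsubQ (fun a ha x hx hax => ?_) (fun p hp => ?_)
        · have hxF : x ∈ Q ∪ R := hup a (Or.inl ha) x hx.1 hax
          rw [← hfix x hxF]; exact hx.2
        · exact ⟨r p, hp.2, hrle p hp.1, fun x hx hpx => hrleast p hp.1 x (Or.inl hx) hpx⟩
      have cR' : PosetConstructible R' := by
        refine ihR R' hsubR (fun a ha x hx hax => ?_) (fun p hp => ?_)
        · have hxF : x ∈ Q ∪ R := hup a (Or.inr ha) x hx.1 hax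
          rw [← hfix x hxF]; exact hx.2
        · exact ⟨r p, hp.2, hrle p hp.1, fun x hx hpx => hrleast p hp.1 x (Or.inr hx) hpx⟩
      have cI' : PosetConstructible (Q' ∩ R') := by
        refine ihQR (Q' ∩ R') (fun x hx => ⟨hsubQ hx.1, hsubR hx.2⟩)
          (fun a ha x hx hax => ?_) (fun p hp => ?_)
        · have hxF : x ∈ Q ∪ R := hup a (Or.inl ha.1) x hx.1.1 hax
          exact ⟨by rw [← hfix x hxF]; exact hx.1.2, by rw [← hfix x hxF]; exact hx.2.2⟩
        · exact ⟨r p, ⟨hp.1.2, hp.2.2⟩, hrle p hp.1.1,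
            fun x hx hpx => hrleast p hp.1.1 x (Or.inl hx.1) hpx⟩
      rw [hSQR]
      exact .step hclQ hclR
        (hcodim Q Q' hQ'def Set.subset_union_left Set.inter_subset_left hcQ)
        (hcodim R R' hR'def Set.subset_union_right Set.inter_subset_right hcR)
        cQ' cR' cI'

/-- Conversely, if `S` is constructible and retracts onto the up-closed subset `F`,
then `F` is constructible. -/
lemma retract_constructible [Finite P] {S : Set P} (hS : PosetConstructible S) :
    ∀ F : Set P, F ⊆ S → (∀ a ∈ F, ∀ x ∈ S, a ≤ x → x ∈ F) →
      (∀ p ∈ S, ∃ g ∈ F, p ≤ g ∧ ∀ x ∈ F, p ≤ x → g ≤ x) →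
      PosetConstructible F := by
  induction hS with
  | @cone A g hg hgr =>
      intro F hFS hup hret
      obtain ⟨g', hg'F, hle, -⟩ := hret g hg
      have : g' = g := le_antisymm (hgr g' (hFS hg'F)) hle
      exact .cone (this ▸ hg'F) (fun x hx => hgr x (hFS hx))
  | @step Q' R' hQ' hR' hcQ' hcR' cQ cR cI ihQ ihR ihI =>
      intro F hFS hup hret
      choose! r hrF hrle hrleast using hret
      have key : ∀ T1 T2 : Set P, (∀ x ∈ Q' ∪ R', x ∈ T1 ∪ T2) →
          (∀ a ∈ T2, ∀ x ∈ Q' ∪ R', x ≤ a → x ∈ T2) →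
          CodimOneIn (T1 ∩ T2) T1 → T1 ⊆ Q' ∪ R' →
          ∀ m, IsMaxIn T1 m → m ∈ F := by
        intro T1 T2 hcover hclT2 hcT1 hT1S m hm
        have hmS : m ∈ Q' ∪ R' := hT1S hm.1
        have hrmS : r m ∈ Q' ∪ R' := hFS (hrF m hmS)
        rcases hcover (r m) hrmS with h1 | h2
        · have : r m = m := hm.2 (r m) h1 (hrle m hmS)
          exact this ▸ hrF m hmS
        · have hmT2 : m ∈ T2 := hclT2 (r m) h2 m hmS (hrle m hmS)
          have hmmaxI : IsMaxIn (T1 ∩ T2) m :=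
            ⟨⟨hm.1, hmT2⟩, fun x hx hmx => hm.2 x hx.1 hmx⟩
          obtain ⟨b, hbmax, hbcov⟩ := hcT1 m hmmaxI
          exact absurd (hm.2 b hbcov.2.1 hbcov.2.2.1.le) hbcov.2.2.1.ne'
      have hcR'' : CodimOneIn (R' ∩ Q') R' := fun a ha =>
        hcR' a ⟨⟨ha.1.2, ha.1.1⟩, fun x hx => ha.2 x ⟨hx.2, hx.1⟩⟩
      have maxQF : ∀ m, IsMaxIn Q' m → m ∈ F :=
        key Q' R' (fun x hx => hx) hR'.2 hcQ' Set.subset_union_left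
      have maxRF : ∀ m, IsMaxIn R' m → m ∈ F :=
        key R' Q' (fun x hx => hx.symm) hQ'.2 hcR'' Set.subset_union_right
      have rQ' : ∀ p ∈ Q', r p ∈ Q' := by
        intro p hp
        obtain ⟨m, hpm, hmmax⟩ := existsMaxAbove hp
        have hpS : p ∈ Q' ∪ R' := Or.inl hp
        have : r p ≤ m := hrleast p hpS m (maxQF m hmmax) hpm
        exact hQ'.2 m hmmax.1 (r p) (hFS (hrF p hpS)) this
      have rR' : ∀ p ∈ R', r p ∈ R' := by
        intro p hp
        obtain ⟨m, hpm, hmmax⟩ := existsMaxAbove hp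
        have hpS : p ∈ Q' ∪ R' := Or.inr hp
        have : r p ≤ m := hrleast p hpS m (maxRF m hmmax) hpm
        exact hR'.2 m hmmax.1 (r p) (hFS (hrF p hpS)) this
      have codim2 : ∀ T' : Set P, (T' ⊆ Q' ∪ R') → CodimOneIn (Q' ∩ R') T' →
          (∀ m, IsMaxIn T' m → m ∈ F) →
          CodimOneIn ((Q' ∩ F) ∩ (R' ∩ F)) (T' ∩ F) := by
        intro T' hT'S hcT' hmaxF a hamax
        have haF : a ∈ F := hamax.1.1.2
        have hamax' : IsMaxIn (Q' ∩ R') a := by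
          refine ⟨⟨hamax.1.1.1, hamax.1.2.1⟩, fun x hx hax => ?_⟩
          have hxF : x ∈ F := hup a haF x (Or.inl hx.1) hax
          exact hamax.2 x ⟨⟨hx.1, hxF⟩, ⟨hx.2, hxF⟩⟩ hax
        obtain ⟨b, hbmax, hbcov⟩ := hcT' a hamax'
        have hbF : b ∈ F := hmaxF b hbmax
        exact ⟨b, ⟨⟨hbmax.1, hbF⟩, fun x hx hbx => hbmax.2 x hx.1 hbx⟩,
          ⟨hbcov.1, haF⟩, ⟨hbmax.1, hbF⟩, hbcov.2.2.1,
          fun x hx hax hxb => hbcov.2.2.2 x hx.1 hax hxb⟩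
      have cQF : PosetConstructible (Q' ∩ F) := by
        refine ihQ (Q' ∩ F) Set.inter_subset_left
          (fun a ha x hx hax => ⟨hx, hup a ha.2 x (Or.inl hx) hax⟩) (fun p hp => ?_)
        exact ⟨r p, ⟨rQ' p hp, hrF p (Or.inl hp)⟩, hrle p (Or.inl hp),
          fun x hx hpx => hrleast p (Or.inl hp) x hx.2 hpx⟩
      have cRF : PosetConstructible (R' ∩ F) := by
        refine ihR (R' ∩ F) Set.inter_subset_left
          (fun a ha x hx hax => ⟨hx, hup a ha.2 x (Or.inr hx) hax⟩) (fun p hp => ?_)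
        exact ⟨r p, ⟨rR' p hp, hrF p (Or.inr hp)⟩, hrle p (Or.inr hp),
          fun x hx hpx => hrleast p (Or.inr hp) x hx.2 hpx⟩
      have cIF : PosetConstructible ((Q' ∩ F) ∩ (R' ∩ F)) := by
        refine ihI ((Q' ∩ F) ∩ (R' ∩ F)) (fun x hx => ⟨hx.1.1, hx.2.1⟩)
          (fun a ha x hx hax => ?_) (fun p hp => ?_)
        · have hxF : x ∈ F := hup a ha.1.2 x (Or.inl hx.1) hax
          exact ⟨⟨hx.1, hxF⟩, ⟨hx.2, hxF⟩⟩
        · have hrpF := hrF p (Or.inl hp.1)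
          exact ⟨r p, ⟨⟨rQ' p hp.1, hrpF⟩, ⟨rR' p hp.2, hrpF⟩⟩, hrle p (Or.inl hp.1),
            fun x hx hpx => hrleast p (Or.inl hp.1) x hx.1.2 hpx⟩
      have hclQF : IsClosedSubposet ((Q' ∩ F) ∪ (R' ∩ F)) (Q' ∩ F) := by
        refine ⟨Set.subset_union_left, fun a ha x hx hxa => ?_⟩
        have hxS : x ∈ Q' ∪ R' := hx.elim (fun h => Or.inl h.1) (fun h => Or.inr h.1)
        exact ⟨hQ'.2 a ha.1 x hxS hxa, hx.elim (fun h => h.2) (fun h => h.2)⟩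
      have hclRF : IsClosedSubposet ((Q' ∩ F) ∪ (R' ∩ F)) (R' ∩ F) := by
        refine ⟨Set.subset_union_right, fun a ha x hx hxa => ?_⟩
        have hxS : x ∈ Q' ∪ R' := hx.elim (fun h => Or.inl h.1) (fun h => Or.inr h.1)
        exact ⟨hR'.2 a ha.1 x hxS hxa, hx.elim (fun h => h.2) (fun h => h.2)⟩
      have hcR2 : CodimOneIn (Q' ∩ R') R' := hcR'
      have hFeq : F = (Q' ∩ F) ∪ (R' ∩ F) := by
        rw [← Set.union_inter_distrib_right]
        exact (Set.inter_eq_self_of_subset_right hFS).symm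
      rw [hFeq]
      exact .step hclQF hclRF
        (codim2 Q' Set.subset_union_left hcQ' maxQF)
        (codim2 R' Set.subset_union_right hcR2 maxRF)
        cQF cRF cIF

end Aux

/-- Let `f : K → L` be a full monotone map of finite posets whose dual `f^op` is a
filtration map.  Then `f^op` is a constructible map iff the order dual of every fiber
`f⁻¹(σ)` is a constructible poset. -/
theorem dual_constructible_iff_fibers {K L : Type*} [PartialOrder K] [PartialOrder L]
    [Finite K] [Finite L] (f : K → L) (hf : Monotone f)
    (hfull : ∀ σ : L, IsFullSub (f ⁻¹' {σ}))
    (hfil : IsFiltrationMap (dualMap f)) :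
    IsConstructibleMap (dualMap f) ↔
      ∀ σ : L, PosetConstructible (OrderDual.ofDual ⁻¹' (f ⁻¹' {σ}) : Set Kᵒᵈ) := by
  classical
  set Fb : L → Set Kᵒᵈ := fun σ => {x | f (OrderDual.ofDual x) = σ} with hFbdef
  set St : L → Set Kᵒᵈ := fun σ => {x | σ ≤ f (OrderDual.ofDual x)} with hStdef
  have hSeq : ∀ σ : L, dualMap f ⁻¹' {y | y ≤ OrderDual.toDual σ} = St σ := fun σ => rfl
  have hFeq : ∀ σ : L, (OrderDual.ofDual ⁻¹' (f ⁻¹' {σ}) : Set Kᵒᵈ) = Fb σ := fun σ => rfl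
  have hFS : ∀ σ : L, Fb σ ⊆ St σ := fun σ x hx => le_of_eq hx.symm
  have hup : ∀ σ : L, ∀ a ∈ Fb σ, ∀ x ∈ St σ, a ≤ x → x ∈ Fb σ := by
    intro σ a ha x hx hax
    have h1 : f (OrderDual.ofDual x) ≤ f (OrderDual.ofDual a) := hf hax
    exact le_antisymm (ha ▸ h1) hx
  have hret : ∀ σ : L, ∀ p ∈ St σ, ∃ g ∈ Fb σ, p ≤ g ∧ ∀ x ∈ Fb σ, p ≤ x → g ≤ x := by
    intro σ p hp
    have hnon : ∃ x, x ∈ f ⁻¹' {σ} ∧ x ≤ OrderDual.ofDual p := by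
      rcases eq_or_lt_of_le hp with heq | hlt
      · exact ⟨OrderDual.ofDual p, heq.symm, le_rfl⟩
      · have hpU : p ∈ dualMap f ⁻¹' {y | y < OrderDual.toDual σ} := hlt
        obtain ⟨m, hpm, hmmax⟩ := existsMaxAbove hpU
        obtain ⟨b, hbmax, hbcov⟩ := hfil (OrderDual.toDual σ) m hmmax
        have hbSt : σ ≤ f (OrderDual.ofDual b) := hbcov.2.1
        have hbfib : f (OrderDual.ofDual b) = σ := by
          by_contra hne
          have hbU : b ∈ dualMap f ⁻¹' {y | y < OrderDual.toDual σ} :=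
            lt_of_le_of_ne hbSt (Ne.symm hne)
          exact absurd (hmmax.2 b hbU hbcov.2.2.1.le) hbcov.2.2.1.ne'
        exact ⟨OrderDual.ofDual b, hbfib, (hpm.trans hbcov.2.2.1.le : p ≤ b)⟩
    rcases hfull σ (OrderDual.ofDual p) with hemp | ⟨g, hgfib, hgle, hgreatest⟩
    · obtain ⟨x, hx1, hx2⟩ := hnon
      exact absurd (Set.eq_empty_iff_forall_notMem.mp hemp x ⟨hx1, hx2⟩) (fun h => h)
    · exact ⟨OrderDual.toDual g, hgfib, hgle,
        fun x hx hpx => hgreatest (OrderDual.ofDual x) hx hpx⟩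
  constructor
  · intro hc σ
    rw [hFeq σ]
    exact retract_constructible ((hSeq σ) ▸ hc.2 (OrderDual.toDual σ)) (Fb σ)
      (hFS σ) (hup σ) (hret σ)
  · intro hfib
    refine ⟨hfil, fun q => ?_⟩
    have := constructible_of_retract ((hFeq (OrderDual.ofDual q)) ▸ hfib (OrderDual.ofDual q))
      (St (OrderDual.ofDual q)) (hFS _) (hup _) (hret _)
    exact (hSeq (OrderDual.ofDual q)) ▸ this
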